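/- Outer relaxation of a constrained minimum: let S be a nonempty compact subset of ℝ^d, let f and c be continuous real-valued functions on S, and assume the set {x ∈ S : c(x) ≤ 0} is nonempty. Then min over {x ∈ S : c(x) ≤ 0} of f(x) equals sup over δ > 0 of ( min over {x ∈ S : c(x) ≤ δ} of f(x) ), and equivalently min over {x ∈ S : c(x) ≤ δ} of f(x) converges to min over {x ∈ S : c(x) ≤ 0} of f(x) as δ → 0⁺. -/

import Mathlib

open Filter Topology

/-- **Outer relaxation of a constrained minimum.** Let `S` be a nonempty compact subset of
`ℝ^d`, `f` and `c` continuous on `S`, and `{x ∈ S : c x ≤ 0}` nonempty. Then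
`min_{x ∈ S, c x ≤ 0} f x = sup_{δ > 0} min_{x ∈ S, c x ≤ δ} f x`, and the relaxed minima
converge to the constrained minimum as `δ → 0⁺`. -/
theorem constrained_min_outer_relaxation (d : ℕ)
    (S : Set (EuclideanSpace ℝ (Fin d))) (hScomp : IsCompact S) (hSne : S.Nonempty)
    (f c : EuclideanSpace ℝ (Fin d) → ℝ)
    (hf : ContinuousOn f S) (hc : ContinuousOn c S)
    (hne : {x ∈ S | c x ≤ 0}.Nonempty) :
    sInf (f '' {x ∈ S | c x ≤ 0}) =
      (⨆ δ : {r : ℝ // 0 < r}, sInf (f '' {x ∈ S | c x ≤ (δ : ℝ)})) ∧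
    Tendsto (fun δ : ℝ => sInf (f '' {x ∈ S | c x ≤ δ})) (𝓝[>] 0)
      (𝓝 (sInf (f '' {x ∈ S | c x ≤ 0}))) := by
  have hAsub : ∀ δ : ℝ, {x ∈ S | c x ≤ δ} ⊆ S := fun δ x hx => hx.1
  have hmono : ∀ {δ₁ δ₂ : ℝ}, δ₁ ≤ δ₂ → {x ∈ S | c x ≤ δ₁} ⊆ {x ∈ S | c x ≤ δ₂} :=
    fun h x hx => ⟨hx.1, hx.2.trans h⟩
  have hbdd : ∀ δ : ℝ, BddBelow (f '' {x ∈ S | c x ≤ δ}) := fun δ =>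
    ((hScomp.image_of_continuousOn hf).bddBelow).mono (Set.image_mono (hAsub δ))
  have hAne : ∀ δ : ℝ, 0 ≤ δ → ({x ∈ S | c x ≤ δ}).Nonempty := fun δ hδ =>
    hne.mono (hmono hδ)
  have hmle : ∀ {δ₁ δ₂ : ℝ}, 0 ≤ δ₁ → δ₁ ≤ δ₂ →
      sInf (f '' {x ∈ S | c x ≤ δ₂}) ≤ sInf (f '' {x ∈ S | c x ≤ δ₁}) := by
    intro δ₁ δ₂ h0 h
    exact csInf_le_csInf (hbdd δ₂) ((hAne δ₁ h0).image f) (Set.image_mono (hmono h))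
  -- key approximation lemma
  have key : ∀ ε : ℝ, 0 < ε → ∃ δ : ℝ, 0 < δ ∧
      sInf (f '' {x ∈ S | c x ≤ 0}) - ε ≤ sInf (f '' {x ∈ S | c x ≤ δ}) := by
    intro ε hε
    set a := sInf (f '' {x ∈ S | c x ≤ 0}) - ε with ha
    by_cases hKne : ({x ∈ S | f x ≤ a}).Nonempty
    · have hKclosed : IsClosed {x ∈ S | f x ≤ a} := by
        have h := hf.preimage_isClosed_of_isClosed hScomp.isClosed (isClosed_Iic (a := a))
        simpa [Set.inter_def] using h
      have hKcomp : IsCompact {x ∈ S | f x ≤ a} :=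
        hScomp.of_isClosed_subset hKclosed (fun x hx => hx.1)
      obtain ⟨x0, hx0K, hx0min⟩ :=
        hKcomp.exists_isMinOn hKne (hc.mono (fun x hx => hx.1))
      have hδ0 : 0 < c x0 := by
        by_contra h
        push_neg at h
        have : sInf (f '' {x ∈ S | c x ≤ 0}) ≤ f x0 :=
          csInf_le (hbdd 0) ⟨x0, ⟨hx0K.1, h⟩, rfl⟩
        have := hx0K.2
        linarith
      refine ⟨c x0 / 2, by linarith, ?_⟩
      refine le_csInf ((hAne _ (by linarith)).image f) ?_
      rintro y ⟨x, hx, rfl⟩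
      by_contra h
      push_neg at h
      have hxK : x ∈ {x ∈ S | f x ≤ a} := ⟨hx.1, le_of_lt h⟩
      have h1 : c x0 ≤ c x := hx0min hxK
      have h2 : c x ≤ c x0 / 2 := hx.2
      linarith
    · refine ⟨1, one_pos, ?_⟩
      refine le_csInf ((hAne 1 zero_le_one).image f) ?_
      rintro y ⟨x, hx, rfl⟩
      by_contra h
      push_neg at h
      exact hKne ⟨x, hx.1, le_of_lt h⟩
  have hle0 : ∀ δ : {r : ℝ // 0 < r},
      sInf (f '' {x ∈ S | c x ≤ (δ : ℝ)}) ≤ sInf (f '' {x ∈ S | c x ≤ 0}) :=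
    fun δ => hmle le_rfl δ.2.le
  have hbddAbove : BddAbove (Set.range fun δ : {r : ℝ // 0 < r} =>
      sInf (f '' {x ∈ S | c x ≤ (δ : ℝ)})) := by
    refine ⟨sInf (f '' {x ∈ S | c x ≤ 0}), ?_⟩
    rintro y ⟨δ, rfl⟩
    exact hle0 δ
  have heq : sInf (f '' {x ∈ S | c x ≤ 0}) =
      (⨆ δ : {r : ℝ // 0 < r}, sInf (f '' {x ∈ S | c x ≤ (δ : ℝ)})) := by
    refine le_antisymm ?_ (ciSup_le hle0)
    refine le_of_forall_pos_le_add ?_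
    intro ε hε
    obtain ⟨δ, hδ, hδε⟩ := key ε hε
    have := le_ciSup hbddAbove (⟨δ, hδ⟩ : {r : ℝ // 0 < r})
    linarith
  refine ⟨heq, ?_⟩
  rw [Metric.tendsto_nhdsWithin_nhds]
  intro ε hε
  obtain ⟨δ, hδ, hδε⟩ := key (ε / 2) (by linarith)
  refine ⟨δ, hδ, ?_⟩
  intro x hx hxd
  rw [Real.dist_eq] at hxd ⊢
  have hx0 : 0 < x := hx
  have hxδ : x ≤ δ := by
    rw [sub_zero] at hxd
    exact le_of_lt (lt_of_abs_lt hxd)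
  have h1 : sInf (f '' {x_1 ∈ S | c x_1 ≤ δ}) ≤ sInf (f '' {x_1 ∈ S | c x_1 ≤ x}) :=
    hmle hx0.le hxδ
  have h2 : sInf (f '' {x_1 ∈ S | c x_1 ≤ x}) ≤ sInf (f '' {x_1 ∈ S | c x_1 ≤ 0}) :=
    hmle le_rfl hx0.le
  rw [abs_lt]
  constructor <;> linarith
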